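/- (Orthonormality of ridge Chebyshev polynomials on the disk.) For integers k, k' ≥ 0 and 0 ≤ j ≤ k, 0 ≤ j' ≤ k', set θ_{j,k} = jπ/(k+1), and let U_m denote the Chebyshev polynomial of the second kind of degree m. Then (1/π) ∫∫_D U_k(x cos θ_{j,k} + y sin θ_{j,k}) · U_{k'}(x cos θ_{j',k'} + y sin θ_{j',k'}) dx dy = 1 if (j,k) = (j',k') and = 0 otherwise, where D is the closed unit disk in ℝ². In particular, the family {U_k(θ_{j,k}; x, y) : k ≥ 0, 0 ≤ j ≤ k} is orthonormal on D with respect to the measure ω(x,y) = 1/π. -/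

import Mathlib

open Real MeasureTheory intervalIntegral Polynomial Polynomial.Chebyshev

lemma int_cos_mul (c : ℝ) (hc : c ≠ 0) : ∫ t in (0:ℝ)..π, Real.cos (c*t) = Real.sin (c*π) / c := by
  have := intervalIntegral.integral_comp_mul_left (fun x => Real.cos x) hc (a := 0) (b := π)
  simp at this
  rw [this]
  field_simp

lemma sin_orth (m n : ℕ) :
    ∫ t in (0:ℝ)..π, Real.sin ((m+1)*t) * Real.sin ((n+1)*t) =
    if m = n then π/2 else 0 := by
  have key : ∀ t : ℝ, Real.sin ((m+1)*t) * Real.sin ((n+1)*t)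
      = (Real.cos (((m:ℝ)-n)*t) - Real.cos (((m:ℝ)+n+2)*t))/2 := by
    intro t
    rw [show ((m:ℝ)-n)*t = (m+1)*t - (n+1)*t by ring, show ((m:ℝ)+n+2)*t = (m+1)*t + (n+1)*t by ring,
      Real.cos_sub, Real.cos_add]
    ring
  rw [intervalIntegral.integral_congr (fun t _ => key t)]
  have i2 : ∫ t in (0:ℝ)..π, Real.cos (((m:ℝ)+n+2)*t) = 0 := by
    rw [int_cos_mul _ (by positivity)]
    have : ((m:ℝ)+n+2)*π = ((m+n+2 : ℤ):ℝ)*π := by push_cast; ring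
    rw [this, Real.sin_int_mul_pi, zero_div]
  by_cases h : m = n
  · subst h
    simp only [sub_self, zero_mul, Real.cos_zero, if_pos rfl]
    have : ∀ t : ℝ, (1 - Real.cos (((m:ℝ)+m+2)*t))/2 = (fun t => (1:ℝ)) t / 2 - Real.cos (((m:ℝ)+m+2)*t)/2 := by
      intro t; ring
    rw [intervalIntegral.integral_congr (fun t _ => this t)]
    rw [intervalIntegral.integral_sub (by exact Continuous.intervalIntegrable (by fun_prop) _ _)
      (by exact Continuous.intervalIntegrable (by fun_prop) _ _)]
    have i2' : ∫ t in (0:ℝ)..π, Real.cos (((m:ℝ)+m+2)*t)/2 = 0 := by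
      rw [intervalIntegral.integral_div, int_cos_mul _ (by positivity)]
      have : ((m:ℝ)+m+2)*π = ((m+m+2 : ℤ):ℝ)*π := by push_cast; ring
      rw [this, Real.sin_int_mul_pi]; simp
    rw [i2']
    simp
    ring
  · rw [if_neg h]
    have i1 : ∫ t in (0:ℝ)..π, Real.cos (((m:ℝ)-n)*t) = 0 := by
      have hmn : (m:ℝ) - n ≠ 0 := by
        simp only [sub_ne_zero]; exact_mod_cast h
      rw [int_cos_mul _ hmn]
      have : ((m:ℝ)-n)*π = (((m:ℤ)-n : ℤ):ℝ)*π := by push_cast; ring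
      rw [this, Real.sin_int_mul_pi, zero_div]
    have : ∀ t : ℝ, (Real.cos (((m:ℝ)-n)*t) - Real.cos (((m:ℝ)+n+2)*t))/2
        = Real.cos (((m:ℝ)-n)*t)/2 - Real.cos (((m:ℝ)+n+2)*t)/2 := fun t => by ring
    rw [intervalIntegral.integral_congr (fun t _ => this t)]
    rw [intervalIntegral.integral_sub (by exact Continuous.intervalIntegrable (by fun_prop) _ _)
      (by exact Continuous.intervalIntegrable (by fun_prop) _ _),
      intervalIntegral.integral_div, intervalIntegral.integral_div, i1, i2]
    simp

lemma cos_subst {g : ℝ → ℝ} (hg : Continuous g) :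
    ∫ t in (0:ℝ)..π, g (Real.cos t) * Real.sin t = ∫ x in (-1:ℝ)..1, g x := by
  have h := intervalIntegral.integral_comp_smul_deriv (f := Real.cos) (f' := fun t => -Real.sin t)
    (g := g) (a := 0) (b := π) (fun x _ => Real.hasDerivAt_cos x)
    (Continuous.continuousOn (by fun_prop)) hg
  simp only [Real.cos_zero, Real.cos_pi, smul_eq_mul, Function.comp] at h
  have e : ∀ t : ℝ, -Real.sin t * g (Real.cos t) = -(g (Real.cos t) * Real.sin t) := fun t => by ring
  rw [intervalIntegral.integral_congr (fun t _ => e t), intervalIntegral.integral_neg,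
    intervalIntegral.integral_symm (-1) 1] at h
  linarith [h]

lemma inner_ftc (n : ℕ) (c d a b : ℝ) (hd : d ≠ 0) :
    ∫ y in a..b, (U ℝ n).eval (c + y*d) =
      ((T ℝ (n+1)).eval (c + b*d) - (T ℝ (n+1)).eval (c + a*d)) / (((n:ℝ)+1) * d) := by
  have hn : ((n:ℝ)+1) * d ≠ 0 := mul_ne_zero (by positivity) hd
  have hder : ∀ y : ℝ, HasDerivAt (fun y : ℝ => (T ℝ ((n:ℤ)+1)).eval (c + y*d) / (((n:ℝ)+1) * d))
      ((U ℝ n).eval (c + y*d)) y := by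
    intro y
    have h1 : HasDerivAt (fun y : ℝ => c + y*d) d y := by
      simpa using ((hasDerivAt_id y).mul_const d).const_add c
    have h2 := (Polynomial.hasDerivAt (T ℝ ((n:ℤ)+1)) (c + y*d)).comp y h1
    have h3 := h2.div_const (((n:ℝ)+1) * d)
    refine h3.congr_deriv ?_
    rw [Polynomial.Chebyshev.T_derivative_eq_U]
    simp only [add_sub_cancel_right, Polynomial.eval_mul, Polynomial.eval_intCast]
    push_cast
    field_simp
  rw [intervalIntegral.integral_eq_sub_of_hasDerivAt (fun y _ => hder y)
    (Continuous.intervalIntegrable ((U ℝ n).continuous_aeval.comp (by fun_prop)) _ _)]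
  push_cast
  ring

lemma disk_slice {F : ℝ × ℝ → ℝ} (hF : Continuous F) :
    ∫ p in {p : ℝ × ℝ | p.1 ^ 2 + p.2 ^ 2 ≤ 1}, F p =
    ∫ x in (-1:ℝ)..1, ∫ y in -Real.sqrt (1 - x^2)..Real.sqrt (1 - x^2), F (x, y) := by
  set D := {p : ℝ × ℝ | p.1 ^ 2 + p.2 ^ 2 ≤ 1} with hD
  have hDm : MeasurableSet D := (isClosed_le (by fun_prop) continuous_const).measurableSet
  have hDc : IsCompact D := by
    refine IsCompact.of_isClosed_subset (isCompact_Icc (a := ((-1:ℝ),(-1:ℝ))) (b := ((1:ℝ),(1:ℝ))))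
      (isClosed_le (by fun_prop) continuous_const) ?_
    rintro ⟨x, y⟩ h
    simp only [hD, Set.mem_setOf_eq] at h
    constructor <;> constructor <;> simp <;> nlinarith
  have hInt : IntegrableOn F D := hF.continuousOn.integrableOn_compact hDc
  have hIntInd : Integrable (D.indicator F) := (integrable_indicator_iff hDm).2 hInt
  rw [← MeasureTheory.integral_indicator hDm]
  rw [Measure.volume_eq_prod] at hIntInd ⊢
  rw [MeasureTheory.integral_prod _ hIntInd]
  have claimA : ∀ x : ℝ, (fun y => D.indicator F (x, y)) =
      fun y => Set.indicator {y : ℝ | x ^ 2 + y ^ 2 ≤ 1} (fun y => F (x, y)) y := by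
    intro x; ext y
    simp [Set.indicator_apply, hD, Set.mem_setOf_eq]
  have outer : ∀ x : ℝ, (∫ y, D.indicator F (x, y)) =
      Set.indicator (Set.Icc (-1:ℝ) 1)
        (fun x => ∫ y in -Real.sqrt (1 - x^2)..Real.sqrt (1 - x^2), F (x, y)) x := by
    intro x
    by_cases hx : x ∈ Set.Icc (-1:ℝ) 1
    · have h1x : (0:ℝ) ≤ 1 - x^2 := by
        rcases hx with ⟨h1, h2⟩; nlinarith
      have hset : {y : ℝ | x ^ 2 + y ^ 2 ≤ 1} =
          Set.Icc (-Real.sqrt (1 - x^2)) (Real.sqrt (1 - x^2)) := by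
        ext y
        simp only [Set.mem_setOf_eq, Set.mem_Icc, ← abs_le]
        constructor
        · intro h
          rw [← Real.sqrt_sq_eq_abs]
          exact Real.sqrt_le_sqrt (by nlinarith)
        · intro h
          nlinarith [sq_abs y, Real.sq_sqrt h1x, mul_self_le_mul_self (abs_nonneg y) h]
      rw [Set.indicator_of_mem hx, claimA x, hset,
        MeasureTheory.integral_indicator measurableSet_Icc,
        intervalIntegral.integral_of_le
          ((neg_nonpos.mpr (Real.sqrt_nonneg _)).trans (Real.sqrt_nonneg _)),
        MeasureTheory.integral_Icc_eq_integral_Ioc]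
    · have hempty : {y : ℝ | x ^ 2 + y ^ 2 ≤ 1} = ∅ := by
        ext y
        simp only [Set.mem_setOf_eq, Set.mem_empty_iff_false, iff_false, not_le]
        simp only [Set.mem_Icc, not_and_or, not_le] at hx
        rcases hx with h1 | h1 <;> nlinarith
      rw [Set.indicator_of_notMem hx, claimA x, hempty]
      simp
  simp only [outer]
  rw [MeasureTheory.integral_indicator measurableSet_Icc,
    intervalIntegral.integral_of_le (by norm_num : (-1:ℝ) ≤ 1),
    MeasureTheory.integral_Icc_eq_integral_Ioc]

noncomputable def rotL (α : ℝ) : ℝ × ℝ →ₗ[ℝ] ℝ × ℝ :=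
  Matrix.toLin (Module.Basis.finTwoProd ℝ) (Module.Basis.finTwoProd ℝ)
    !![Real.cos α, -Real.sin α; Real.sin α, Real.cos α]

lemma rotL_apply (α : ℝ) (p : ℝ × ℝ) :
    rotL α p = (p.1 * Real.cos α - p.2 * Real.sin α, p.1 * Real.sin α + p.2 * Real.cos α) := by
  simp only [rotL, Matrix.toLin_finTwoProd_apply]
  rw [Prod.mk.injEq]
  constructor <;> ring

lemma rotL_det (α : ℝ) : LinearMap.det (rotL α) = 1 := by
  rw [rotL, LinearMap.det_toLin, Matrix.det_fin_two_of]
  nlinarith [Real.sin_sq_add_cos_sq α]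

lemma rot_integral (α : ℝ) {F : ℝ × ℝ → ℝ} (hF : Continuous F) :
    ∫ p in {p : ℝ × ℝ | p.1 ^ 2 + p.2 ^ 2 ≤ 1}, F p
      = ∫ p in {p : ℝ × ℝ | p.1 ^ 2 + p.2 ^ 2 ≤ 1},
          F (p.1 * Real.cos α - p.2 * Real.sin α, p.1 * Real.sin α + p.2 * Real.cos α) := by
  have hdet : LinearMap.det (rotL α) ≠ 0 := by rw [rotL_det]; norm_num
  have hmap : Measure.map (rotL α) volume = volume := by
    rw [Measure.map_linearMap_addHaar_eq_smul_addHaar _ hdet, rotL_det]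
    simp
  have hDm : MeasurableSet {p : ℝ × ℝ | p.1 ^ 2 + p.2 ^ 2 ≤ 1} :=
    (isClosed_le (by fun_prop) continuous_const).measurableSet
  have hpre : (rotL α) ⁻¹' {p : ℝ × ℝ | p.1 ^ 2 + p.2 ^ 2 ≤ 1}
      = {p : ℝ × ℝ | p.1 ^ 2 + p.2 ^ 2 ≤ 1} := by
    ext p
    simp only [Set.mem_preimage, Set.mem_setOf_eq, rotL_apply]
    constructor <;> intro h <;> nlinarith [Real.sin_sq_add_cos_sq α]
  conv_lhs => rw [← hmap]
  rw [MeasureTheory.setIntegral_map hDm hF.aestronglyMeasurable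
    ((rotL α).continuous_of_finiteDimensional.measurable.aemeasurable), hpre]
  simp only [rotL_apply]

lemma poly_cont {X : Type*} [TopologicalSpace X] (p : Polynomial ℝ) {f : X → ℝ} (hf : Continuous f) :
    Continuous fun x => p.eval (f x) := p.continuous.comp hf

lemma calc_eq (m n : ℕ) :
    ∫ x in (-1:ℝ)..1, ∫ y in -Real.sqrt (1-x^2)..Real.sqrt (1-x^2),
      (U ℝ m).eval x * (U ℝ n).eval x = if m = n then π else 0 := by
  have step1 : ∀ x : ℝ, (∫ y in -Real.sqrt (1-x^2)..Real.sqrt (1-x^2),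
      (U ℝ m).eval x * (U ℝ n).eval x)
      = 2 * Real.sqrt (1-x^2) * ((U ℝ m).eval x * (U ℝ n).eval x) := by
    intro x
    rw [intervalIntegral.integral_const, smul_eq_mul]
    ring
  rw [intervalIntegral.integral_congr (fun x _ => step1 x)]
  have hg : Continuous fun x : ℝ => 2 * Real.sqrt (1-x^2) * ((U ℝ m).eval x * (U ℝ n).eval x) := by
    exact ((continuous_const.mul (Real.continuous_sqrt.comp (by fun_prop))).mul
      ((poly_cont _ continuous_id).mul (poly_cont _ continuous_id)))
  rw [← cos_subst hg]
  have key : ∀ t ∈ Set.uIcc (0:ℝ) π,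
      2 * Real.sqrt (1 - Real.cos t^2) * ((U ℝ m).eval (Real.cos t) * (U ℝ n).eval (Real.cos t))
        * Real.sin t
      = 2 * (Real.sin ((m+1)*t) * Real.sin ((n+1)*t)) := by
    intro t ht
    rw [Set.uIcc_of_le Real.pi_pos.le] at ht
    have hst : 0 ≤ Real.sin t := Real.sin_nonneg_of_nonneg_of_le_pi ht.1 ht.2
    have hsq : Real.sqrt (1 - Real.cos t ^ 2) = Real.sin t := by
      rw [show 1 - Real.cos t ^ 2 = Real.sin t ^ 2 by
        nlinarith [Real.sin_sq_add_cos_sq t], Real.sqrt_sq hst]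
    have hUm := Polynomial.Chebyshev.U_real_cos t (m : ℤ)
    have hUn := Polynomial.Chebyshev.U_real_cos t (n : ℤ)
    push_cast at hUm hUn
    rw [hsq, ← hUm, ← hUn]
    ring
  rw [intervalIntegral.integral_congr key, intervalIntegral.integral_const_mul, sin_orth]
  by_cases h : m = n <;> simp [h] <;> ring

lemma calc_ne (m n : ℕ) (γ : ℝ) (hγ : Real.sin γ ≠ 0)
    (hzero : Real.sin (((n:ℝ)+1)*γ) = 0 ∨ m ≠ n) :
    ∫ x in (-1:ℝ)..1, ∫ y in -Real.sqrt (1-x^2)..Real.sqrt (1-x^2),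
      (U ℝ m).eval x * (U ℝ n).eval (x * Real.cos γ + y * Real.sin γ) = 0 := by
  have step1 : ∀ x : ℝ, (∫ y in -Real.sqrt (1-x^2)..Real.sqrt (1-x^2),
      (U ℝ m).eval x * (U ℝ n).eval (x * Real.cos γ + y * Real.sin γ))
      = (U ℝ m).eval x *
        (((T ℝ (n+1)).eval (x * Real.cos γ + Real.sqrt (1-x^2) * Real.sin γ)
          - (T ℝ (n+1)).eval (x * Real.cos γ + -Real.sqrt (1-x^2) * Real.sin γ))
          / (((n:ℝ)+1) * Real.sin γ)) := by
    intro x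
    rw [intervalIntegral.integral_const_mul, inner_ftc n (x * Real.cos γ) (Real.sin γ) _ _ hγ]
  rw [intervalIntegral.integral_congr (fun x _ => step1 x)]
  have hg : Continuous fun x : ℝ => (U ℝ m).eval x *
      (((T ℝ (n+1)).eval (x * Real.cos γ + Real.sqrt (1-x^2) * Real.sin γ)
        - (T ℝ (n+1)).eval (x * Real.cos γ + -Real.sqrt (1-x^2) * Real.sin γ))
        / (((n:ℝ)+1) * Real.sin γ)) := by
    apply (poly_cont _ continuous_id).mul
    apply Continuous.div_const
    exact (poly_cont _ (by fun_prop)).sub (poly_cont _ (by fun_prop))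
  rw [← cos_subst hg]
  have key : ∀ t ∈ Set.uIcc (0:ℝ) π,
      ((U ℝ m).eval (Real.cos t) *
        (((T ℝ (n+1)).eval (Real.cos t * Real.cos γ + Real.sqrt (1-Real.cos t^2) * Real.sin γ)
          - (T ℝ (n+1)).eval (Real.cos t * Real.cos γ + -Real.sqrt (1-Real.cos t^2) * Real.sin γ))
          / (((n:ℝ)+1) * Real.sin γ))) * Real.sin t
      = (Real.sin ((m+1)*t) * Real.sin ((n+1)*t)) *
          (2 * Real.sin (((n:ℝ)+1)*γ) / (((n:ℝ)+1) * Real.sin γ)) := by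
    intro t ht
    rw [Set.uIcc_of_le Real.pi_pos.le] at ht
    have hst : 0 ≤ Real.sin t := Real.sin_nonneg_of_nonneg_of_le_pi ht.1 ht.2
    have hsq : Real.sqrt (1 - Real.cos t ^ 2) = Real.sin t := by
      rw [show 1 - Real.cos t ^ 2 = Real.sin t ^ 2 by
        nlinarith [Real.sin_sq_add_cos_sq t], Real.sqrt_sq hst]
    rw [hsq,
      show Real.cos t * Real.cos γ + Real.sin t * Real.sin γ = Real.cos (t - γ) from
        (Real.cos_sub t γ).symm,
      show Real.cos t * Real.cos γ + -Real.sin t * Real.sin γ = Real.cos (t + γ) by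
        rw [Real.cos_add]; ring,
      Polynomial.Chebyshev.T_real_cos, Polynomial.Chebyshev.T_real_cos]
    have hUm := Polynomial.Chebyshev.U_real_cos t (m : ℤ)
    push_cast at hUm ⊢
    rw [Real.cos_sub_cos,
      show (((n:ℝ)+1)*(t-γ) + ((n:ℝ)+1)*(t+γ))/2 = ((n:ℝ)+1)*t by ring,
      show (((n:ℝ)+1)*(t-γ) - ((n:ℝ)+1)*(t+γ))/2 = -(((n:ℝ)+1)*γ) by ring,
      Real.sin_neg, ← hUm]
    ring
  rw [intervalIntegral.integral_congr key, intervalIntegral.integral_mul_const, sin_orth]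
  rcases hzero with h | h
  · simp [h]
  · simp [h]

/-- Orthonormality of the ridge Chebyshev polynomials on the closed unit disk:
for `θ_{j,k} = jπ/(k+1)` (`0 ≤ j ≤ k`) and `U_m` the Chebyshev polynomial of the
second kind, `(1/π)∫∫_D U_k(x cos θ_{j,k} + y sin θ_{j,k}) ·
U_{k'}(x cos θ_{j',k'} + y sin θ_{j',k'}) dx dy = δ_{(j,k),(j',k')}`. -/
theorem ridge_chebyshev_orthonormal (k k' j j' : ℕ) (hj : j ≤ k) (hj' : j' ≤ k') :
    (1 / π) *
      ∫ p in {p : ℝ × ℝ | p.1 ^ 2 + p.2 ^ 2 ≤ 1},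
        (Polynomial.Chebyshev.U ℝ k).eval
            (p.1 * Real.cos (j * π / (k + 1)) + p.2 * Real.sin (j * π / (k + 1))) *
          (Polynomial.Chebyshev.U ℝ k').eval
            (p.1 * Real.cos (j' * π / (k' + 1)) + p.2 * Real.sin (j' * π / (k' + 1))) =
      if (j, k) = (j', k') then 1 else 0 := by
  set α := (j:ℝ) * π / ((k:ℝ) + 1) with hα
  set β := (j':ℝ) * π / ((k':ℝ) + 1) with hβ
  have hk1 : (0:ℝ) < (k:ℝ) + 1 := by positivity
  have hk'1 : (0:ℝ) < (k':ℝ) + 1 := by positivity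
  have hα0 : 0 ≤ α := by rw [hα]; positivity
  have hβ0 : 0 ≤ β := by rw [hβ]; positivity
  have hαπ : α < π := by
    rw [hα, div_lt_iff₀ hk1]
    have h1 : (j:ℝ) < (k:ℝ) + 1 := by exact_mod_cast Nat.lt_succ_of_le hj
    nlinarith [Real.pi_pos]
  have hβπ : β < π := by
    rw [hβ, div_lt_iff₀ hk'1]
    have h1 : (j':ℝ) < (k':ℝ) + 1 := by exact_mod_cast Nat.lt_succ_of_le hj'
    nlinarith [Real.pi_pos]
  have hF : Continuous fun p : ℝ × ℝ =>
      (U ℝ k).eval (p.1 * Real.cos α + p.2 * Real.sin α) *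
      (U ℝ k').eval (p.1 * Real.cos β + p.2 * Real.sin β) :=
    (poly_cont _ (by fun_prop)).mul (poly_cont _ (by fun_prop))
  rw [rot_integral α hF]
  simp only []
  have hiden : (fun p : ℝ × ℝ =>
      (U ℝ k).eval ((p.1 * Real.cos α - p.2 * Real.sin α) * Real.cos α
        + (p.1 * Real.sin α + p.2 * Real.cos α) * Real.sin α) *
      (U ℝ k').eval ((p.1 * Real.cos α - p.2 * Real.sin α) * Real.cos β
        + (p.1 * Real.sin α + p.2 * Real.cos α) * Real.sin β))
      = fun p : ℝ × ℝ => (U ℝ k).eval p.1 *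
          (U ℝ k').eval (p.1 * Real.cos (β - α) + p.2 * Real.sin (β - α)) := by
    funext p
    rw [Real.cos_sub, Real.sin_sub]
    congr 1
    · congr 1
      linear_combination p.1 * Real.sin_sq_add_cos_sq α
    · congr 1
      ring
  rw [hiden]
  have hG : Continuous fun p : ℝ × ℝ => (U ℝ k).eval p.1 *
      (U ℝ k').eval (p.1 * Real.cos (β - α) + p.2 * Real.sin (β - α)) :=
    (poly_cont _ (by fun_prop)).mul (poly_cont _ (by fun_prop))
  rw [disk_slice hG]
  simp only []
  by_cases hsin : Real.sin (β - α) = 0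
  · have hγ0 : β - α = 0 := by
      rcases Real.sin_eq_zero_iff.mp hsin with ⟨z, hz⟩
      have h1 : -π < β - α := by linarith
      have h2 : β - α < π := by linarith
      have hz0 : z = 0 := by
        by_contra hzz
        have h3 : (1:ℝ) ≤ |(z:ℝ)| := by
          have : (1:ℤ) ≤ |z| := Int.one_le_abs hzz
          exact_mod_cast this
        rw [← hz] at h1 h2
        rcases abs_cases (z:ℝ) with ⟨he, _⟩ | ⟨he, _⟩ <;> nlinarith [Real.pi_pos]
      rw [← hz, hz0]; simp
    rw [hγ0]
    simp only [Real.cos_zero, Real.sin_zero, mul_one, mul_zero, add_zero]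
    rw [calc_eq]
    have hβα : β = α := by linarith [sub_eq_zero.mp hγ0]
    have hiff : ((j, k) = (j', k')) ↔ k = k' := by
      constructor
      · intro h
        exact (Prod.mk.injEq _ _ _ _ ▸ h).2
      · intro h
        subst h
        have hjj : (j:ℝ) = (j':ℝ) := by
          rw [hβ, hα] at hβα
          field_simp at hβα
          exact hβα.symm
        have : j = j' := by exact_mod_cast hjj
        rw [this]
    by_cases hkk : k = k'
    · rw [if_pos hkk, if_pos (hiff.mpr hkk), one_div, inv_mul_cancel₀ Real.pi_ne_zero]
    · rw [if_neg hkk, if_neg (fun h => hkk (hiff.mp h)), mul_zero]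
  · rw [calc_ne k k' (β - α) hsin ?_]
    · have hne : (j, k) ≠ (j', k') := by
        intro h
        obtain ⟨h1, h2⟩ := Prod.mk.injEq _ _ _ _ ▸ h
        apply hsin
        rw [hα, hβ, h1, h2, sub_self, Real.sin_zero]
      rw [if_neg hne, mul_zero]
    · by_cases hkk : k = k'
      · left
        subst hkk
        have hc : ((k:ℝ) + 1) * (β - α) = (((j':ℤ) - (j:ℤ) : ℤ) : ℝ) * π := by
          rw [hβ, hα]
          push_cast
          field_simp
        rw [hc]
        exact Real.sin_int_mul_pi _
      · right; exact hkk
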